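/- arXiv:math/0009223 — 2 statements merged into one kernel-verified Lean document; each statement's English description precedes it below -/
import Mathlib

section
/- If R : [t₀,∞) → ℝ is differentiable and satisfies R'(t) = (β₂+α)I(t) − (d+ε₂+γ)R(t) where I is continuous and I(t) → ∞ as t → ∞, and β₂+α > 0, d+ε₂+γ > 0, then R(t) → ∞. -/
open Filter

/-- If R' = (β₂+α)I − (d+ε₂+γ)R with I continuous, I(t) → ∞, β₂+α > 0 and
d+ε₂+γ > 0, then R(t) → ∞. -/
theorem removed_class_growth
    (β2 α d ε2 γ t0 : ℝ) (hβα : 0 < β2 + α) (hd : 0 < d + ε2 + γ)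
    (R I : ℝ → ℝ)
    (hI_cont : ContinuousOn I (Set.Ici t0))
    (hR_ode : ∀ t ≥ t0, HasDerivAt R ((β2 + α) * I t - (d + ε2 + γ) * R t) t)
    (hI_lim : Tendsto I atTop atTop) :
    Tendsto R atTop atTop := by
  set a := d + ε2 + γ with ha
  set b := β2 + α with hb
  rw [tendsto_atTop]
  intro M
  set C := a * (M + 1) / b with hC
  have hbC : b * C = a * (M + 1) := by
    rw [hC]; exact mul_div_cancel₀ (a * (M + 1)) hβα.ne'
  obtain ⟨T₁, hT₁⟩ := eventually_atTop.1 (hI_lim.eventually_ge_atTop C)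
  set T := max t0 T₁ with hT
  set F : ℝ → ℝ := fun t => Real.exp (a * t) * (R t - (M + 1)) with hF
  have hder : ∀ t ≥ t0, HasDerivAt F (Real.exp (a * t) * (b * I t - a * (M + 1))) t := by
    intro t ht
    have h1 : HasDerivAt (fun t : ℝ => Real.exp (a * t)) (Real.exp (a * t) * a) t := by
      simpa using ((hasDerivAt_id t).const_mul a).exp
    have h2 : HasDerivAt (fun t => R t - (M + 1)) (b * I t - a * R t) t :=
      (hR_ode t ht).sub_const _
    have := h1.mul h2
    refine this.congr_deriv ?_
    ring
  have hmono : MonotoneOn F (Set.Ici T) := by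
    apply monotoneOn_of_deriv_nonneg (convex_Ici T)
    · intro t ht
      exact ((hder t (le_trans (le_max_left _ _) ht)).differentiableAt).continuousAt.continuousWithinAt
    · intro t ht
      rw [interior_Ici] at ht
      exact ((hder t (le_trans (le_max_left _ _) (le_of_lt ht))).differentiableAt).differentiableWithinAt
    · intro t ht
      rw [interior_Ici] at ht
      have ht0 : t0 ≤ t := le_trans (le_max_left _ _) (le_of_lt ht)
      rw [(hder t ht0).deriv]
      have hIt : C ≤ I t := hT₁ t (le_trans (le_max_right _ _) (le_of_lt ht))
      have : a * (M + 1) ≤ b * I t := by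
        rw [← hbC]
        exact mul_le_mul_of_nonneg_left hIt hβα.le
      have := sub_nonneg.2 this
      positivity
  have hlow : ∀ t ≥ T, F T * Real.exp (-(a * t)) + (M + 1) ≤ R t := by
    intro t ht
    have h1 : F T ≤ F t := hmono Set.self_mem_Ici ht ht
    have hpos : 0 < Real.exp (a * t) := Real.exp_pos _
    have : F T * Real.exp (-(a * t)) ≤ R t - (M + 1) := by
      rw [Real.exp_neg]
      rw [mul_inv_le_iff₀ hpos]
      calc F T ≤ F t := h1
        _ = (R t - (M + 1)) * Real.exp (a * t) := by rw [hF]; ring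
    linarith
  have htend : Tendsto (fun t => F T * Real.exp (-(a * t))) atTop (nhds 0) := by
    have h1 : Tendsto (fun t : ℝ => a * t) atTop atTop :=
      Tendsto.const_mul_atTop hd tendsto_id
    have h2 : Tendsto (fun t => Real.exp (-(a * t))) atTop (nhds 0) :=
      Real.tendsto_exp_neg_atTop_nhds_zero.comp h1
    simpa using h2.const_mul (F T)
  have hsmall : ∀ᶠ t in atTop, -1 ≤ F T * Real.exp (-(a * t)) :=
    htend.eventually (eventually_ge_nhds (by norm_num : (-1 : ℝ) < 0))
  filter_upwards [eventually_ge_atTop T, hsmall] with t ht h1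
  have := hlow t ht
  linarith
end

section
/- The Dulac-type functional: in the open triangle {s>0, i>0, r>0, s+i+r=1}, the vector field g defined from the proportions system satisfies (curl g)·(1,1,1) = −(b₁/(s²r) + (b₂+γ)/(s²i) + (β₂+α)/(sr²)), which is strictly negative whenever b₁ > 0 or b₂+γ > 0 or β₂+α > 0. -/
/-- Right-hand sides of the proportions system restricted to the plane
s + i + r = 1, written as functions of (s, i) with r = 1 − s − i. -/
def propF1 (b0 b1 b2 β ε1 ε2 γ lam : ℝ) (s i : ℝ) : ℝ :=
  b0 * s + b1 * i + (b2 + γ) * (1 - s - i) - b0 * s ^ 2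
    - (b1 + β + lam - ε1) * i * s - (b2 - ε2) * s * (1 - s - i)

def propF2 (b0 b1 b2 β β1 ε1 ε2 lam α : ℝ) (s i : ℝ) : ℝ :=
  (β1 - ε1 - α) * i + (lam - b0) * i * s - (b1 + β - ε1) * i ^ 2
    - (b2 - ε2) * i * (1 - s - i)

def propF3 (b0 b1 b2 β β2 ε1 ε2 γ α : ℝ) (s i : ℝ) : ℝ :=
  (β2 + α) * i - (ε2 + γ) * (1 - s - i) - b0 * s * (1 - s - i)
    - (b1 + β - ε1) * i * (1 - s - i) - (b2 - ε2) * (1 - s - i) ^ 2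

/-- The Dulac-type vector field g = g₁ + g₂ + g₃ of the paper, as a map of
(s,i) into ℝ³ (with r = 1 − s − i). -/
noncomputable def dulacG (b0 b1 b2 β β1 β2 ε1 ε2 γ lam α : ℝ) (s i : ℝ) : Fin 3 → ℝ :=
  ![propF3 b0 b1 b2 β β2 ε1 ε2 γ α s i / (s * (1 - s - i))
      - propF2 b0 b1 b2 β β1 ε1 ε2 lam α s i / (s * i),
    propF1 b0 b1 b2 β ε1 ε2 γ lam s i / (s * i)
      - propF3 b0 b1 b2 β β2 ε1 ε2 γ α s i / (i * (1 - s - i)),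
    propF2 b0 b1 b2 β β1 ε1 ε2 lam α s i / (i * (1 - s - i))
      - propF1 b0 b1 b2 β ε1 ε2 γ lam s i / (s * (1 - s - i))]

private lemma hd_quad (a b c x : ℝ) :
    HasDerivAt (fun t : ℝ => a + b * t + c * t ^ 2) (b + c * (2 * x)) x := by
  have h1 : HasDerivAt (fun t : ℝ => a + b * t) b x := by
    simpa using ((hasDerivAt_id x).const_mul b).const_add a
  have h2 : HasDerivAt (fun t : ℝ => c * t ^ 2) (c * (2 * x)) x := by
    simpa using (hasDerivAt_pow 2 x).const_mul c
  exact h1.add h2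

set_option maxHeartbeats 1600000 in
/-- On the open simplex {s>0, i>0, r>0, s+i+r=1} (with r = 1−s−i), the surface
curl of the Dulac field satisfies
(curl g)·(1,1,1) = ∂/∂s (g·(0,1,−1)) − ∂/∂i (g·(1,0,−1))
  = −(b₁/(s²r) + (b₂+γ)/(s²i) + (β₂+α)/(sr²)) < 0. -/
theorem dulac_curl_identity
    (b0 b1 b2 β β1 β2 γ lam ε1 ε2 α : ℝ)
    (hb0 : 0 ≤ b0) (hb1 : 0 ≤ b1) (hb2 : 0 ≤ b2) (hβ1 : 0 ≤ β1) (hβ2 : 0 ≤ β2)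
    (hγ : 0 ≤ γ) (hlam : 0 ≤ lam) (hε1 : 0 ≤ ε1) (hε2 : 0 ≤ ε2) (hα : 0 ≤ α)
    (hβ : β = β1 + β2) (hpos : 0 < b1 + (b2 + γ) + (β2 + α))
    (s i : ℝ) (hs : 0 < s) (hi : 0 < i) (hr : 0 < 1 - s - i) :
    deriv (fun x => dulacG b0 b1 b2 β β1 β2 ε1 ε2 γ lam α x i 1
        - dulacG b0 b1 b2 β β1 β2 ε1 ε2 γ lam α x i 2) s
      - deriv (fun y => dulacG b0 b1 b2 β β1 β2 ε1 ε2 γ lam α s y 0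
        - dulacG b0 b1 b2 β β1 β2 ε1 ε2 γ lam α s y 2) i
      = -(b1 / (s ^ 2 * (1 - s - i)) + (b2 + γ) / (s ^ 2 * i)
          + (β2 + α) / (s * (1 - s - i) ^ 2)) ∧
    -(b1 / (s ^ 2 * (1 - s - i)) + (b2 + γ) / (s ^ 2 * i)
        + (β2 + α) / (s * (1 - s - i) ^ 2)) < 0 := by
  have hs0 : s ≠ 0 := hs.ne'
  have hi0 : i ≠ 0 := hi.ne'
  have hr0 : (1:ℝ) - s - i ≠ 0 := hr.ne'
  -- x-direction numerators
  have h1x : HasDerivAt (fun x : ℝ => propF1 b0 b1 b2 β ε1 ε2 γ lam x i)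
      ((b0 - (b2+γ) - (b1+β+lam-ε1)*i - (b2-ε2)*(1-i)) + (-b0 + (b2-ε2)) * (2*s)) s :=
    (hd_quad (b1*i + (b2+γ)*(1-i)) (b0 - (b2+γ) - (b1+β+lam-ε1)*i - (b2-ε2)*(1-i))
      (-b0 + (b2-ε2)) s).congr_of_eventuallyEq
      (Filter.Eventually.of_forall fun x => by unfold propF1; ring)
  have h2x : HasDerivAt (fun x : ℝ => propF2 b0 b1 b2 β β1 ε1 ε2 lam α x i)
      (((lam-b0)*i + (b2-ε2)*i) + 0 * (2*s)) s :=
    (hd_quad ((β1-ε1-α)*i - (b1+β-ε1)*i^2 - (b2-ε2)*i*(1-i)) ((lam-b0)*i + (b2-ε2)*i)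
      0 s).congr_of_eventuallyEq
      (Filter.Eventually.of_forall fun x => by unfold propF2; ring)
  have h3x : HasDerivAt (fun x : ℝ => propF3 b0 b1 b2 β β2 ε1 ε2 γ α x i)
      (((ε2+γ) - b0*(1-i) + (b1+β-ε1)*i + 2*(b2-ε2)*(1-i)) + (b0 - (b2-ε2)) * (2*s)) s :=
    (hd_quad ((β2+α)*i - (ε2+γ)*(1-i) - (b1+β-ε1)*i*(1-i) - (b2-ε2)*(1-i)^2)
      ((ε2+γ) - b0*(1-i) + (b1+β-ε1)*i + 2*(b2-ε2)*(1-i)) (b0 - (b2-ε2))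
      s).congr_of_eventuallyEq
      (Filter.Eventually.of_forall fun x => by unfold propF3; ring)
  -- x-direction denominators
  have hdxi : HasDerivAt (fun x : ℝ => x * i) (i + 0 * (2*s)) s :=
    (hd_quad 0 i 0 s).congr_of_eventuallyEq (Filter.Eventually.of_forall fun x => by ring)
  have hdir : HasDerivAt (fun x : ℝ => i * (1 - x - i)) (-i + 0 * (2*s)) s :=
    (hd_quad (i*(1-i)) (-i) 0 s).congr_of_eventuallyEq
      (Filter.Eventually.of_forall fun x => by ring)
  have hdxr : HasDerivAt (fun x : ℝ => x * (1 - x - i)) ((1-i) + (-1) * (2*s)) s :=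
    (hd_quad 0 (1-i) (-1) s).congr_of_eventuallyEq
      (Filter.Eventually.of_forall fun x => by ring)
  have HX := ((h1x.div hdxi (mul_ne_zero hs0 hi0)).sub
      (h3x.div hdir (mul_ne_zero hi0 hr0))).sub
    ((h2x.div hdir (mul_ne_zero hi0 hr0)).sub (h1x.div hdxr (mul_ne_zero hs0 hr0)))
  -- y-direction numerators
  have h1y : HasDerivAt (fun y : ℝ => propF1 b0 b1 b2 β ε1 ε2 γ lam s y)
      ((b1 - (b2+γ) - (b1+β+lam-ε1)*s + (b2-ε2)*s) + 0 * (2*i)) i :=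
    (hd_quad (b0*s + (b2+γ)*(1-s) - b0*s^2 - (b2-ε2)*s*(1-s))
      (b1 - (b2+γ) - (b1+β+lam-ε1)*s + (b2-ε2)*s) 0 i).congr_of_eventuallyEq
      (Filter.Eventually.of_forall fun y => by unfold propF1; ring)
  have h2y : HasDerivAt (fun y : ℝ => propF2 b0 b1 b2 β β1 ε1 ε2 lam α s y)
      (((β1-ε1-α) + (lam-b0)*s - (b2-ε2)*(1-s)) + (-(b1+β-ε1) + (b2-ε2)) * (2*i)) i :=
    (hd_quad 0 ((β1-ε1-α) + (lam-b0)*s - (b2-ε2)*(1-s)) (-(b1+β-ε1) + (b2-ε2))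
      i).congr_of_eventuallyEq
      (Filter.Eventually.of_forall fun y => by unfold propF2; ring)
  have h3y : HasDerivAt (fun y : ℝ => propF3 b0 b1 b2 β β2 ε1 ε2 γ α s y)
      (((β2+α) + (ε2+γ) + b0*s - (b1+β-ε1)*(1-s) + 2*(b2-ε2)*(1-s))
        + ((b1+β-ε1) - (b2-ε2)) * (2*i)) i :=
    (hd_quad (-(ε2+γ)*(1-s) - b0*s*(1-s) - (b2-ε2)*(1-s)^2)
      ((β2+α) + (ε2+γ) + b0*s - (b1+β-ε1)*(1-s) + 2*(b2-ε2)*(1-s))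
      ((b1+β-ε1) - (b2-ε2)) i).congr_of_eventuallyEq
      (Filter.Eventually.of_forall fun y => by unfold propF3; ring)
  -- y-direction denominators
  have hdsr : HasDerivAt (fun y : ℝ => s * (1 - s - y)) (-s + 0 * (2*i)) i :=
    (hd_quad (s*(1-s)) (-s) 0 i).congr_of_eventuallyEq
      (Filter.Eventually.of_forall fun y => by ring)
  have hdsy : HasDerivAt (fun y : ℝ => s * y) (s + 0 * (2*i)) i :=
    (hd_quad 0 s 0 i).congr_of_eventuallyEq (Filter.Eventually.of_forall fun y => by ring)
  have hdyr : HasDerivAt (fun y : ℝ => y * (1 - s - y)) ((1-s) + (-1) * (2*i)) i :=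
    (hd_quad 0 (1-s) (-1) i).congr_of_eventuallyEq
      (Filter.Eventually.of_forall fun y => by ring)
  have HY := ((h3y.div hdsr (mul_ne_zero hs0 hr0)).sub
      (h2y.div hdsy (mul_ne_zero hs0 hi0))).sub
    ((h2y.div hdyr (mul_ne_zero hi0 hr0)).sub (h1y.div hdsr (mul_ne_zero hs0 hr0)))
  have ex : (fun x => dulacG b0 b1 b2 β β1 β2 ε1 ε2 γ lam α x i 1
        - dulacG b0 b1 b2 β β1 β2 ε1 ε2 γ lam α x i 2)
      = fun x => (propF1 b0 b1 b2 β ε1 ε2 γ lam x i / (x * i)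
          - propF3 b0 b1 b2 β β2 ε1 ε2 γ α x i / (i * (1 - x - i)))
        - (propF2 b0 b1 b2 β β1 ε1 ε2 lam α x i / (i * (1 - x - i))
          - propF1 b0 b1 b2 β ε1 ε2 γ lam x i / (x * (1 - x - i))) := by
    funext x
    simp only [dulacG, Matrix.cons_val_one, Matrix.head_cons, Matrix.cons_val_zero,
      Matrix.cons_val_two, Matrix.tail_cons]
  have ey : (fun y => dulacG b0 b1 b2 β β1 β2 ε1 ε2 γ lam α s y 0
        - dulacG b0 b1 b2 β β1 β2 ε1 ε2 γ lam α s y 2)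
      = fun y => (propF3 b0 b1 b2 β β2 ε1 ε2 γ α s y / (s * (1 - s - y))
          - propF2 b0 b1 b2 β β1 ε1 ε2 lam α s y / (s * y))
        - (propF2 b0 b1 b2 β β1 ε1 ε2 lam α s y / (y * (1 - s - y))
          - propF1 b0 b1 b2 β ε1 ε2 γ lam s y / (s * (1 - s - y))) := by
    funext y
    simp only [dulacG, Matrix.cons_val_one, Matrix.head_cons, Matrix.cons_val_zero,
      Matrix.cons_val_two, Matrix.tail_cons]
  constructor
  · simp only [Pi.sub_def, Pi.div_def] at HX HY
    rw [ex, ey, HX.deriv, HY.deriv]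
    unfold propF1 propF2 propF3
    field_simp
    ring
  · have key : 0 < b1 ∨ 0 < b2 + γ ∨ 0 < β2 + α := by
      by_contra h
      push_neg at h
      obtain ⟨h1, h2, h3⟩ := h
      linarith
    have hB : 0 ≤ (b2 + γ) / (s ^ 2 * i) := by positivity
    have hA : 0 ≤ b1 / (s ^ 2 * (1 - s - i)) := by positivity
    have hC : 0 ≤ (β2 + α) / (s * (1 - s - i) ^ 2) := by positivity
    rcases key with h | h | h
    · have : 0 < b1 / (s ^ 2 * (1 - s - i)) := by positivity
      linarith
    · have : 0 < (b2 + γ) / (s ^ 2 * i) := by positivity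
      linarith
    · have : 0 < (β2 + α) / (s * (1 - s - i) ^ 2) := by positivity
      linarith
end
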